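/- arXiv:2007.06192 — 3 statements merged into one kernel-verified Lean document; each statement's English description precedes it below -/
import Mathlib

section
/- Consider a k-layer width-n ReLU network with IID symmetric continuous parameters. Let P(n,k) be the probability the network is alive (some input has nonzero Jacobian at the output). Then P(n,k) ≤ (1 - 2^{-n²-n})^{k-1}. -/
open MeasureTheory
open scoped ENNReal

/-- Parameters of one width-n ReLU layer: a matrix (as `Fin n → Fin n → ℝ`) and a bias. -/
abbrev LayerParams (n : ℕ) := (Fin n → Fin n → ℝ) × (Fin n → ℝ)

/-- Pre-ReLU response of one layer. -/
def preact {n : ℕ} (p : LayerParams n) (y : Fin n → ℝ) : Fin n → ℝ :=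
  fun i => (∑ j, p.1 i j * y j) + p.2 i

/-- ReLU layer map. -/
def layerMap {n : ℕ} (p : LayerParams n) (y : Fin n → ℝ) : Fin n → ℝ :=
  fun i => max (preact p y i) 0

/-- Output of the first j layers of the network on input x. -/
def netOut {n : ℕ} (θ : ℕ → LayerParams n) (x : Fin n → ℝ) : ℕ → (Fin n → ℝ)
  | 0 => x
  | j + 1 => layerMap (θ j) (netOut θ x j)

/-- x survives layer j+1 iff some coordinate of the pre-activation is positive. -/
def survives {n : ℕ} (θ : ℕ → LayerParams n) (x : Fin n → ℝ) (k : ℕ) : Prop :=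
  ∀ j < k, ∃ i : Fin n, 0 < preact (θ j) (netOut θ x j) i

/-- Extend a finite family of layer parameters to all of ℕ (only indices < k matter). -/
def extParams {n k : ℕ} (θ : Fin k → LayerParams n) : ℕ → LayerParams n :=
  fun j => if h : j < k then θ ⟨j, h⟩ else default

/-- IID parameter measure for a k-layer width-n network, each scalar drawn from ρ. -/
noncomputable def netMeasure (n k : ℕ) (ρ : Measure ℝ) : Measure (Fin k → LayerParams n) :=
  Measure.pi fun _ : Fin k =>
    (Measure.pi fun _ : Fin n => Measure.pi fun _ : Fin n => ρ).prod
      (Measure.pi fun _ : Fin n => ρ)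

lemma rho_neg_half (ρ : Measure ℝ) [IsProbabilityMeasure ρ]
    (hsym : ρ.map (fun t => -t) = ρ) (hcont : ∀ c : ℝ, ρ {c} = 0) :
    ρ (Set.Iio 0) = 2⁻¹ := by
  have h1 : ρ (Set.Ioi (0:ℝ)) = ρ (Set.Iio 0) := by
    conv_lhs => rw [← hsym]
    rw [Measure.map_apply measurable_neg measurableSet_Ioi]
    congr 1
    ext t
    simp
  have h2 : ρ (Set.Iio 0) + ρ (Set.Ici (0:ℝ)) = 1 := by
    rw [← measure_union (by simp [Set.disjoint_left]) measurableSet_Ici,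
      Set.Iio_union_Ici, measure_univ]
  have h3 : ρ (Set.Ici (0:ℝ)) = ρ (Set.Ioi 0) := by
    have he : Set.Ici (0:ℝ) = {0} ∪ Set.Ioi 0 := by
      ext t; simp [le_iff_lt_or_eq, eq_comm, or_comm]
    rw [he, measure_union (by simp) measurableSet_Ioi, hcont, zero_add]
  have key : 2 * ρ (Set.Iio (0:ℝ)) = 1 := by
    rw [two_mul]; nth_rewrite 2 [← h1]; rw [← h3]; exact h2
  have := ENNReal.eq_inv_of_mul_eq_one_left key
  rw [this, inv_inv]

/-- The "all parameters negative" event for one layer. -/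
def allNeg (n : ℕ) : Set (LayerParams n) :=
  {p | (∀ i j, p.1 i j < 0) ∧ ∀ i, p.2 i < 0}

lemma allNeg_eq (n : ℕ) : allNeg n =
    (Set.univ.pi fun _ : Fin n => Set.univ.pi fun _ : Fin n => Set.Iio (0:ℝ)) ×ˢ
      (Set.univ.pi fun _ : Fin n => Set.Iio (0:ℝ)) := by
  ext p; simp [allNeg, Set.mem_pi]

lemma allNeg_measurable (n : ℕ) : MeasurableSet (allNeg n) := by
  rw [allNeg_eq]
  exact (MeasurableSet.univ_pi fun _ => MeasurableSet.univ_pi fun _ => measurableSet_Iio).prod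
    (MeasurableSet.univ_pi fun _ => measurableSet_Iio)

lemma allNeg_measure (n : ℕ) (ρ : Measure ℝ) [IsProbabilityMeasure ρ]
    (hsym : ρ.map (fun t => -t) = ρ) (hcont : ∀ c : ℝ, ρ {c} = 0) :
    ((Measure.pi fun _ : Fin n => Measure.pi fun _ : Fin n => ρ).prod
      (Measure.pi fun _ : Fin n => ρ)) (allNeg n) = 2⁻¹ ^ (n ^ 2 + n) := by
  rw [allNeg_eq, Measure.prod_prod, Measure.pi_pi, Measure.pi_pi]
  rw [rho_neg_half ρ hsym hcont]
  simp [Finset.prod_const, ← pow_mul, ← pow_add, sq]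

/-- Upper bound: for a k-layer width-n ReLU network with all parameters IID from a
symmetric atomless (continuous) distribution, the probability that the network is
alive (some input survives all k layers, i.e. has nonzero Jacobian at the output)
is at most (1 - 2^{-n²-n})^{k-1}. -/
theorem network_alive_upper_bound (n k : ℕ) (ρ : Measure ℝ) [IsProbabilityMeasure ρ]
    (hsym : ρ.map (fun t => -t) = ρ) (hcont : ∀ c : ℝ, ρ {c} = 0) :
    netMeasure n k ρ {θ | ∃ x : Fin n → ℝ, survives (extParams θ) x k} ≤
      (1 - (2 : ℝ≥0∞)⁻¹ ^ (n ^ 2 + n)) ^ (k - 1) := by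
  set μ₁ : Measure (LayerParams n) :=
    (Measure.pi fun _ : Fin n => Measure.pi fun _ : Fin n => ρ).prod
      (Measure.pi fun _ : Fin n => ρ) with hμ₁
  have hsub : {θ : Fin k → LayerParams n | ∃ x : Fin n → ℝ, survives (extParams θ) x k} ⊆
      Set.univ.pi fun j : Fin k => if 1 ≤ (j : ℕ) then (allNeg n)ᶜ else Set.univ := by
    rintro θ ⟨x, hx⟩ j -
    by_cases hj : 1 ≤ (j : ℕ)
    · simp only [hj, if_true, Set.mem_compl_iff]
      intro hB
      obtain ⟨i, hi⟩ := hx j.1 j.isLt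
      have hext : extParams θ j.1 = θ j := by
        simp [extParams, j.isLt]
      rw [hext] at hi
      obtain ⟨m, hm⟩ : ∃ m, (j : ℕ) = m + 1 := ⟨(j:ℕ) - 1, by omega⟩
      have hy : ∀ i', 0 ≤ netOut (extParams θ) x j.1 i' := by
        rw [hm]
        intro i'
        exact le_max_right _ _
      have : preact (θ j) (netOut (extParams θ) x j.1) i < 0 := by
        unfold preact
        apply add_neg_of_nonpos_of_neg
        · exact Finset.sum_nonpos fun l _ =>
            mul_nonpos_of_nonpos_of_nonneg (hB.1 i l).le (hy l)
        · exact hB.2 i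
      linarith
    · simp [hj]
  calc netMeasure n k ρ {θ | ∃ x : Fin n → ℝ, survives (extParams θ) x k}
      ≤ netMeasure n k ρ
        (Set.univ.pi fun j : Fin k => if 1 ≤ (j : ℕ) then (allNeg n)ᶜ else Set.univ) :=
        measure_mono hsub
    _ = ∏ j : Fin k, μ₁ (if 1 ≤ (j : ℕ) then (allNeg n)ᶜ else Set.univ) := by
        rw [netMeasure, Measure.pi_pi]
    _ = ∏ j : Fin k, (if 1 ≤ (j : ℕ) then (1 - 2⁻¹ ^ (n ^ 2 + n)) else 1) := by
        refine Finset.prod_congr rfl fun j _ => ?_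
        split
        · rw [prob_compl_eq_one_sub (allNeg_measurable n), allNeg_measure n ρ hsym hcont]
        · simp
    _ = (1 - (2 : ℝ≥0∞)⁻¹ ^ (n ^ 2 + n)) ^ (k - 1) := by
        rw [Finset.prod_ite, Finset.prod_const, Finset.prod_const, one_pow, mul_one]
        congr 1
        rcases k with _ | m
        · simp
        · have : (Finset.univ.filter fun j : Fin (m+1) => 1 ≤ (j : ℕ)) =
              Finset.univ.erase 0 := by
            ext j
            simp only [Finset.mem_filter, Finset.mem_univ, true_and, Finset.mem_erase, ne_eq,
              and_true, Fin.ext_iff, Fin.val_zero]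
            omega
          rw [this, Finset.card_erase_of_mem (Finset.mem_univ 0)]
          simp
end

section
/- Consider a k-layer width-n ReLU network with IID symmetric continuous parameters and an input set S₀ ⊆ ℝ^n with nonempty interior not containing only 0. Then P(n,k) ≥ (1 - 2^{-n})^k. -/
open MeasureTheory
open scoped ENNReal

/-! ### Auxiliary material -/

open Set

section Aux

variable {n : ℕ}

lemma netOut_congr {θ₁ θ₂ : ℕ → LayerParams n} (x : Fin n → ℝ) (j : ℕ)
    (h : ∀ m < j, θ₁ m = θ₂ m) : netOut θ₁ x j = netOut θ₂ x j := by
  induction j with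
  | zero => rfl
  | succ j ih =>
    simp only [netOut]
    rw [ih (fun m hm => h m (hm.trans (Nat.lt_succ_self j))), h j (Nat.lt_succ_self j)]

lemma continuous_preact_i (i : Fin n) :
    Continuous fun q : LayerParams n × (Fin n → ℝ) => preact q.1 q.2 i := by
  unfold preact
  apply Continuous.add
  · apply continuous_finset_sum
    intro j _
    exact ((continuous_apply j).comp ((continuous_apply i).comp
      (continuous_fst.comp continuous_fst))).mul ((continuous_apply j).comp continuous_snd)
  · exact (continuous_apply i).comp (continuous_snd.comp continuous_fst)

lemma continuous_extParams {k : ℕ} (j : ℕ) :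
    Continuous fun θ : Fin k → LayerParams n => extParams θ j := by
  by_cases h : j < k
  · simp only [extParams, dif_pos h]; exact continuous_apply _
  · simp only [extParams, dif_neg h]; exact continuous_const

lemma continuous_netOut {k : ℕ} (x : Fin n → ℝ) (j : ℕ) :
    Continuous fun θ : Fin k → LayerParams n => netOut (extParams θ) x j := by
  induction j with
  | zero => exact continuous_const
  | succ j ih =>
    show Continuous fun θ : Fin k → LayerParams n =>
      layerMap (extParams θ j) (netOut (extParams θ) x j)
    have h1 : Continuous fun q : LayerParams n × (Fin n → ℝ) => layerMap q.1 q.2 := by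
      apply continuous_pi
      intro i
      exact ((continuous_preact_i i).max continuous_const)
    exact h1.comp ((continuous_extParams j).prodMk ih)

lemma measurableSet_survives {k : ℕ} (x : Fin n → ℝ) (m : ℕ) :
    MeasurableSet {θ : Fin k → LayerParams n | survives (extParams θ) x m} := by
  have : {θ : Fin k → LayerParams n | survives (extParams θ) x m} =
      ⋂ j ∈ Finset.range m, ⋃ i : Fin n,
        {θ | 0 < preact (extParams θ j) (netOut (extParams θ) x j) i} := by
    ext θ
    simp [survives]
  rw [this]
  refine MeasurableSet.biInter (Finset.range m).countable_toSet fun j _ => ?_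
  refine MeasurableSet.iUnion fun i => ?_
  have hc : Continuous fun θ : Fin k → LayerParams n =>
      preact (extParams θ j) (netOut (extParams θ) x j) i :=
    (continuous_preact_i i).comp ((continuous_extParams j).prodMk (continuous_netOut x j))
  exact (isOpen_lt continuous_const hc).measurableSet

/-- The measure on the parameters of a single layer. -/
noncomputable def layerM (n : ℕ) (ρ : Measure ℝ) : Measure (LayerParams n) :=
  (Measure.pi fun _ : Fin n => Measure.pi fun _ : Fin n => ρ).prod
    (Measure.pi fun _ : Fin n => ρ)

variable (ρ : Measure ℝ) [IsProbabilityMeasure ρ]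

instance : IsProbabilityMeasure (layerM n ρ) := by
  unfold layerM; infer_instance

instance (k : ℕ) : IsProbabilityMeasure (netMeasure n k ρ) := by
  show IsProbabilityMeasure (Measure.pi fun _ : Fin k => layerM n ρ)
  infer_instance

omit [IsProbabilityMeasure ρ] in
lemma measure_Iic_neg (hsym : ρ.map (fun t => -t) = ρ) (u : ℝ) :
    ρ (Iic (-u)) = ρ (Ici u) := by
  conv_lhs => rw [← hsym]
  rw [Measure.map_apply measurable_neg measurableSet_Iic]
  congr 1
  ext t
  simp [neg_le_neg_iff, le_neg]

lemma measure_Ici_eq (hcont : ∀ c : ℝ, ρ {c} = 0) (u : ℝ) :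
    ρ (Ici u) = 1 - ρ (Iic u) := by
  have h1 : ρ (Ici u) = ρ (Ioi u) := by
    refine le_antisymm ?_ (measure_mono Ioi_subset_Ici_self)
    have : (Ici u : Set ℝ) = {u} ∪ Ioi u := by
      ext t; simp [le_iff_lt_or_eq, or_comm, eq_comm]
    rw [this]
    calc ρ ({u} ∪ Ioi u) ≤ ρ {u} + ρ (Ioi u) := measure_union_le _ _
    _ = ρ (Ioi u) := by rw [hcont u, zero_add]
  rw [h1, ← compl_Iic, measure_compl measurableSet_Iic (measure_ne_top ρ _), measure_univ]

lemma prod_half (hsym : ρ.map (fun t => -t) = ρ) (hcont : ∀ c : ℝ, ρ {c} = 0)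
    (y : Fin n → ℝ) :
    ((Measure.pi fun _ : Fin n => ρ).prod ρ)
      {q : (Fin n → ℝ) × ℝ | (∑ j, q.1 j * y j) + q.2 ≤ 0} = 2⁻¹ := by
  set ν : Measure (Fin n → ℝ) := Measure.pi fun _ : Fin n => ρ with hν
  have hcmeas : Measurable fun a : Fin n → ℝ => ∑ j, a j * y j := by
    apply Finset.measurable_sum
    intro j _
    exact (measurable_pi_apply j).mul_const _
  have hC : MeasurableSet {q : (Fin n → ℝ) × ℝ | (∑ j, q.1 j * y j) + q.2 ≤ 0} := by
    have : Continuous fun q : (Fin n → ℝ) × ℝ => (∑ j, q.1 j * y j) + q.2 := by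
      refine Continuous.add ?_ continuous_snd
      exact continuous_finset_sum _ fun j _ =>
        ((continuous_apply j).comp continuous_fst).mul continuous_const
    exact (isClosed_le this continuous_const).measurableSet
  rw [Measure.prod_apply hC]
  have hpre : ∀ a : Fin n → ℝ,
      (Prod.mk a ⁻¹' {q : (Fin n → ℝ) × ℝ | (∑ j, q.1 j * y j) + q.2 ≤ 0})
        = Iic (-(∑ j, a j * y j)) := by
    intro a
    ext t
    simp only [mem_preimage, mem_setOf_eq, mem_Iic]
    constructor <;> intro h <;> linarith
  simp_rw [hpre]
  set F : (Fin n → ℝ) → ℝ≥0∞ := fun a => ρ (Iic (∑ j, a j * y j)) with hF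
  have hM : Measurable fun u : ℝ => ρ (Iic u) :=
    Monotone.measurable fun u v huv => measure_mono (Iic_subset_Iic.2 huv)
  have hFmeas : Measurable F := hM.comp hcmeas
  have hstep : ∀ a : Fin n → ℝ, ρ (Iic (-(∑ j, a j * y j))) = 1 - F a := by
    intro a
    rw [measure_Iic_neg ρ hsym, measure_Ici_eq ρ hcont]
  simp_rw [hstep]
  have hFle : ∀ a, F a ≤ 1 := fun a => prob_le_one
  have hintF : ∫⁻ a, F a ∂ν ≤ 1 := by
    calc ∫⁻ a, F a ∂ν ≤ ∫⁻ _, 1 ∂ν := lintegral_mono hFle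
    _ = 1 := by simp
  have hint1 : ∫⁻ a, (1 - F a) ∂ν = 1 - ∫⁻ a, F a ∂ν := by
    rw [lintegral_sub hFmeas (ne_top_of_le_ne_top ENNReal.one_ne_top hintF)
      (Filter.Eventually.of_forall hFle), lintegral_one, measure_univ]
  have hneg : MeasurePreserving (fun a : Fin n → ℝ => fun i => -(a i)) ν ν :=
    MeasureTheory.measurePreserving_pi _ _
      (fun _ => { measurable := measurable_neg, map_eq := hsym })
  have key : ∀ a : Fin n → ℝ, (1:ℝ≥0∞) - F a = F (fun i => -(a i)) := by
    intro a
    rw [hF]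
    simp only
    have hsum : (∑ j, (-(a j)) * y j) = -(∑ j, a j * y j) := by
      rw [← Finset.sum_neg_distrib]
      simp [neg_mul]
    rw [hsum, hstep a]
  have hswap : ∫⁻ a, (1 - F a) ∂ν = ∫⁻ a, F a ∂ν := by
    simp_rw [key]
    exact hneg.lintegral_comp hFmeas
  rw [hswap]
  have hx : ∫⁻ a, F a ∂ν + ∫⁻ a, F a ∂ν = 1 := by
    have hxx : ∫⁻ a, F a ∂ν = 1 - ∫⁻ a, F a ∂ν := hswap.symm.trans hint1
    nth_rewrite 1 [hxx]
    exact tsub_add_cancel_of_le hintF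
  have h2 : (2:ℝ≥0∞) * ∫⁻ a, F a ∂ν = 1 := by rw [two_mul]; exact hx
  calc ∫⁻ a, F a ∂ν = 2⁻¹ * (2 * ∫⁻ a, F a ∂ν) := by
        rw [← mul_assoc, ENNReal.inv_mul_cancel (by norm_num) (by norm_num), one_mul]
  _ = 2⁻¹ := by rw [h2, mul_one]

omit [IsProbabilityMeasure ρ] in
lemma measurableSet_dead (y : Fin n → ℝ) :
    MeasurableSet {p : LayerParams n | ∀ i, preact p y i ≤ 0} := by
  have : {p : LayerParams n | ∀ i, preact p y i ≤ 0} =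
      ⋂ i, {p : LayerParams n | preact p y i ≤ 0} := by ext p; simp
  rw [this]
  refine MeasurableSet.iInter fun i => ?_
  have hc : Continuous fun p : LayerParams n => preact p y i :=
    (continuous_preact_i i).comp (continuous_id.prodMk continuous_const)
  exact (isClosed_le hc continuous_const).measurableSet

lemma layer_compl (hsym : ρ.map (fun t => -t) = ρ) (hcont : ∀ c : ℝ, ρ {c} = 0)
    (y : Fin n → ℝ) :
    layerM n ρ {p : LayerParams n | ∀ i, preact p y i ≤ 0} = 2⁻¹ ^ n := by
  set ν : Measure (Fin n → ℝ) := Measure.pi fun _ : Fin n => ρ with hν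
  have hmp := MeasureTheory.measurePreserving_arrowProdEquivProdArrow
    (Fin n → ℝ) ℝ (Fin n) (fun _ => ν) (fun _ => ρ)
  have hS := measurableSet_dead (n := n) y
  have hmain : layerM n ρ {p : LayerParams n | ∀ i, preact p y i ≤ 0} =
      (Measure.pi fun _ : Fin n => ν.prod ρ)
        ((MeasurableEquiv.arrowProdEquivProdArrow (Fin n → ℝ) ℝ (Fin n)) ⁻¹'
          {p : LayerParams n | ∀ i, preact p y i ≤ 0}) :=
    (hmp.measure_preimage hS.nullMeasurableSet).symm
  rw [hmain]
  have hpre : (MeasurableEquiv.arrowProdEquivProdArrow (Fin n → ℝ) ℝ (Fin n)) ⁻¹'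
      {p : LayerParams n | ∀ i, preact p y i ≤ 0} =
      univ.pi (fun _ : Fin n => {q : (Fin n → ℝ) × ℝ | (∑ j, q.1 j * y j) + q.2 ≤ 0}) := by
    ext g
    simp [MeasurableEquiv.arrowProdEquivProdArrow, Equiv.arrowProdEquivProdArrow, preact]
  rw [hpre, Measure.pi_pi]
  simp [hν, prod_half ρ hsym hcont y]

lemma layer_event (hsym : ρ.map (fun t => -t) = ρ) (hcont : ∀ c : ℝ, ρ {c} = 0)
    (y : Fin n → ℝ) :
    layerM n ρ {p : LayerParams n | ∃ i, 0 < preact p y i} = 1 - 2⁻¹ ^ n := by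
  have hcompl : {p : LayerParams n | ∃ i, 0 < preact p y i} =
      {p : LayerParams n | ∀ i, preact p y i ≤ 0}ᶜ := by
    ext p; simp [not_forall, not_le]
  rw [hcompl, measure_compl (measurableSet_dead y) (measure_ne_top _ _), measure_univ,
    layer_compl ρ hsym hcont y]

lemma survives_measure (hsym : ρ.map (fun t => -t) = ρ) (hcont : ∀ c : ℝ, ρ {c} = 0)
    (x : Fin n → ℝ) : ∀ k,
    netMeasure n k ρ {θ : Fin k → LayerParams n | survives (extParams θ) x k}
      = (1 - (2 : ℝ≥0∞)⁻¹ ^ n) ^ k := by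
  intro k
  induction k with
  | zero =>
    have : {θ : Fin 0 → LayerParams n | survives (extParams θ) x 0} = univ := by
      ext θ; simp [survives]
    rw [this, measure_univ, pow_zero]
  | succ k ih =>
    set e := MeasurableEquiv.piFinSuccAbove (fun _ : Fin (k+1) => LayerParams n) (Fin.last k)
      with he
    have hmp := MeasureTheory.measurePreserving_piFinSuccAbove
      (fun _ : Fin (k+1) => layerM n ρ) (Fin.last k)
    set E : Set (LayerParams n × (Fin k → LayerParams n)) :=
      {q | survives (extParams q.2) x k ∧
        ∃ i, 0 < preact q.1 (netOut (extParams q.2) x k) i} with hE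
    set A : Set (Fin k → LayerParams n) :=
      {θ' | survives (extParams θ') x k} with hA
    have hAmeas : MeasurableSet A := measurableSet_survives x k
    have hEmeas : MeasurableSet E := by
      have hB : IsOpen {q : LayerParams n × (Fin k → LayerParams n) |
          ∃ i, 0 < preact q.1 (netOut (extParams q.2) x k) i} := by
        have : {q : LayerParams n × (Fin k → LayerParams n) |
            ∃ i, 0 < preact q.1 (netOut (extParams q.2) x k) i} =
            ⋃ i, {q : LayerParams n × (Fin k → LayerParams n) |
              0 < preact q.1 (netOut (extParams q.2) x k) i} := by
          ext q; simp
        rw [this]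
        exact isOpen_iUnion fun i => isOpen_lt continuous_const
          ((continuous_preact_i i).comp
            (continuous_fst.prodMk ((continuous_netOut x k).comp continuous_snd)))
      have : E = (univ ×ˢ A) ∩ {q : LayerParams n × (Fin k → LayerParams n) |
          ∃ i, 0 < preact q.1 (netOut (extParams q.2) x k) i} := by
        ext q; simp [hE, hA, and_comm]
      rw [this]
      exact (MeasurableSet.univ.prod hAmeas).inter hB.measurableSet
    -- the survives set is the preimage of E under e
    have hset : {θ : Fin (k+1) → LayerParams n | survives (extParams θ) x (k+1)}
        = e ⁻¹' E := by
      ext θ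
      set θ' : Fin k → LayerParams n := fun j => θ (Fin.castSucc j) with hθ'
      have heθ : e θ = (θ (Fin.last k), θ') := by
        simp only [he, MeasurableEquiv.piFinSuccAbove_apply]
        refine Prod.ext rfl ?_
        funext j
        simp [Fin.removeNth, Fin.succAbove_last, Fin.init, hθ']
      have hext : ∀ m (hm : m < k), extParams θ' m = extParams θ m := by
        intro m hm
        have hm' : m < k + 1 := hm.trans (Nat.lt_succ_self k)
        simp only [extParams, dif_pos hm, dif_pos hm']
        rfl
      have hnet : ∀ j, j ≤ k → netOut (extParams θ') x j = netOut (extParams θ) x j := by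
        intro j hj
        exact netOut_congr x j (fun m hm => hext m (lt_of_lt_of_le hm hj))
      have hlast : extParams θ k = θ (Fin.last k) := by
        simp only [extParams, dif_pos (Nat.lt_succ_self k)]
        rfl
      simp only [mem_setOf_eq, mem_preimage, heθ, hE]
      constructor
      · intro h
        refine ⟨fun j hj => ?_, ?_⟩
        · rw [hext j hj, hnet j hj.le]
          exact h j (by omega)
        · have h2 := h k (by omega)
          rw [hlast, ← hnet k le_rfl] at h2
          exact h2
      · rintro ⟨h1, h2⟩ j hj
        rcases Nat.lt_or_ge j k with hjk | hjk
        · rw [← hext j hjk, ← hnet j hjk.le]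
          exact h1 j hjk
        · have hj' : j = k := by omega
          rw [hj', hlast, ← hnet k le_rfl]
          exact h2
    have hmeas_eq : netMeasure n (k+1) ρ
        {θ : Fin (k+1) → LayerParams n | survives (extParams θ) x (k+1)}
        = (layerM n ρ).prod (netMeasure n k ρ) E := by
      rw [hset]
      exact hmp.measure_preimage hEmeas.nullMeasurableSet
    rw [hmeas_eq, Measure.prod_apply_symm hEmeas]
    have hinner : ∀ θ' : Fin k → LayerParams n,
        layerM n ρ ((fun t => (t, θ')) ⁻¹' E)
          = A.indicator (fun _ => 1 - (2 : ℝ≥0∞)⁻¹ ^ n) θ' := by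
      intro θ'
      by_cases hθ : survives (extParams θ') x k
      · rw [Set.indicator_of_mem (show θ' ∈ A from hθ)]
        have : (fun t => (t, θ')) ⁻¹' E =
            {p : LayerParams n | ∃ i, 0 < preact p (netOut (extParams θ') x k) i} := by
          ext t; simp [hE, hθ]
        rw [this, layer_event ρ hsym hcont]
      · rw [Set.indicator_of_notMem (show θ' ∉ A from hθ)]
        have : (fun t => (t, θ')) ⁻¹' E = ∅ := by
          ext t; simp [hE, hθ]
        simp [this]
    calc ∫⁻ θ', layerM n ρ ((fun t => (t, θ')) ⁻¹' E) ∂netMeasure n k ρ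
        = ∫⁻ θ', A.indicator (fun _ => 1 - (2 : ℝ≥0∞)⁻¹ ^ n) θ' ∂netMeasure n k ρ :=
          lintegral_congr hinner
    _ = (1 - (2 : ℝ≥0∞)⁻¹ ^ n) * netMeasure n k ρ A := by
          rw [lintegral_indicator hAmeas, setLIntegral_const]
    _ = (1 - (2 : ℝ≥0∞)⁻¹ ^ n) ^ (k+1) := by
          rw [hA] at ih ⊢
          rw [ih, pow_succ]
          ring

end Aux

/-- Lower bound: for a k-layer width-n ReLU network with all parameters IID from a
symmetric atomless (continuous) distribution, and an input set S₀ with nonempty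
interior (hence containing a nonzero point), the probability that the network is
alive on S₀ is at least (1 - 2^{-n})^k. -/
theorem network_alive_lower_bound (n k : ℕ) (ρ : Measure ℝ) [IsProbabilityMeasure ρ]
    (hsym : ρ.map (fun t => -t) = ρ) (hcont : ∀ c : ℝ, ρ {c} = 0)
    (S₀ : Set (Fin n → ℝ)) (hS : (interior S₀).Nonempty) (hS0 : S₀ ≠ {0}) :
    (1 - (2 : ℝ≥0∞)⁻¹ ^ n) ^ k ≤
      netMeasure n k ρ {θ | ∃ x ∈ S₀, survives (extParams θ) x k} := by
  obtain ⟨x₀, hx₀⟩ := hS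
  have hx₀S : x₀ ∈ S₀ := interior_subset hx₀
  have hsub : {θ : Fin k → LayerParams n | survives (extParams θ) x₀ k} ⊆
      {θ | ∃ x ∈ S₀, survives (extParams θ) x k} :=
    fun θ hθ => ⟨x₀, hx₀S, hθ⟩
  calc (1 - (2 : ℝ≥0∞)⁻¹ ^ n) ^ k
      = netMeasure n k ρ {θ : Fin k → LayerParams n | survives (extParams θ) x₀ k} :=
        (survives_measure ρ hsym hcont x₀ k).symm
  _ ≤ netMeasure n k ρ {θ | ∃ x ∈ S₀, survives (extParams θ) x k} := measure_mono hsub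
end

section
/- Let n(k) = ⌈-log₂(1 - p^{1/k})⌉ for fixed p ∈ (0,1). Then along the path (n(k), k), the lower bound (1 - 2^{-n(k)})^k ≥ p for all k, so the probability of living initialization stays bounded away from 0 as k → ∞ provided the width grows as n(k) ~ log₂ k. -/
/-- For fixed p ∈ (0,1), along the path n(k) = ⌈-log₂(1 - p^{1/k})⌉ the lower bound
(1 - 2^{-n(k)})^k is at least p for every k ≥ 1; hence any survival probability
P(n,k) dominating the lower bound stays bounded away from 0 (by p) as k → ∞. -/
theorem logarithmic_width_suffices (p : ℝ) (hp : p ∈ Set.Ioo (0 : ℝ) 1)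
    (P : ℕ → ℕ → ℝ)
    (hlb : ∀ n k : ℕ, (1 - (2 : ℝ) ^ (-(n : ℝ))) ^ k ≤ P n k) :
    ∀ k : ℕ, 1 ≤ k →
      p ≤ (1 - (2 : ℝ) ^ (-(⌈-Real.logb 2 (1 - p ^ ((1 : ℝ) / k))⌉₊ : ℝ))) ^ k ∧
      p ≤ P ⌈-Real.logb 2 (1 - p ^ ((1 : ℝ) / k))⌉₊ k := by
  intro k hk
  obtain ⟨hp0, hp1⟩ := hp
  have hk0 : (0 : ℝ) < (k : ℝ) := by exact_mod_cast hk
  set q : ℝ := p ^ ((1 : ℝ) / k) with hq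
  have hq0 : 0 < q := Real.rpow_pos_of_pos hp0 _
  have hq1 : q < 1 := Real.rpow_lt_one hp0.le hp1 (by positivity)
  have h1q : 0 < 1 - q := by linarith
  set n : ℕ := ⌈-Real.logb 2 (1 - q)⌉₊ with hn
  have hle : -Real.logb 2 (1 - q) ≤ (n : ℝ) := Nat.le_ceil _
  have h2 : (2 : ℝ) ^ (-(n : ℝ)) ≤ 1 - q := by
    have : (2 : ℝ) ^ (-(n : ℝ)) ≤ (2 : ℝ) ^ (Real.logb 2 (1 - q)) :=
      Real.rpow_le_rpow_left_iff (by norm_num) |>.2 (by linarith)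
    calc (2 : ℝ) ^ (-(n : ℝ)) ≤ (2 : ℝ) ^ (Real.logb 2 (1 - q)) := this
      _ = 1 - q := Real.rpow_logb (by norm_num) (by norm_num) h1q
  have hbase : q ≤ 1 - (2 : ℝ) ^ (-(n : ℝ)) := by linarith
  have hmain : p ≤ (1 - (2 : ℝ) ^ (-(n : ℝ))) ^ k := by
    have hqk : q ^ k = p := by
      rw [hq, ← Real.rpow_natCast (p ^ ((1:ℝ)/k)) k, ← Real.rpow_mul hp0.le]
      rw [one_div, inv_mul_cancel₀ hk0.ne', Real.rpow_one]
    calc p = q ^ k := hqk.symm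
      _ ≤ (1 - (2 : ℝ) ^ (-(n : ℝ))) ^ k := pow_le_pow_left₀ hq0.le hbase k
  exact ⟨hmain, hmain.trans (hlb n k)⟩
end
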